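/- Let M ⊂ ℝ^k be a smooth compact ℓ-dimensional submanifold. Then M satisfies the local scaling property with respect to κ = ℓ/k and g(r) = r^k: there exist constants c₃, c₄, r₀ > 0 such that for all 0 < δ < r < r₀, all x ∈ M, c₃ δ^{k−ℓ} r^ℓ ≤ H^k(B(x,r) ∩ Δ(M,δ)) ≤ c₄ δ^{k−ℓ} r^ℓ. -/

import Mathlib

open Set MeasureTheory Metric Filter Topology ENNReal NNReal

noncomputable section

/-- The limsup of a sequence of sets: points belonging to infinitely many of them. -/
def limsupSet {X : Type*} (A : ℕ → Set X) : Set X :=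
  ⋂ N, ⋃ n, ⋃ (_ : N ≤ n), A n

/-- `s`-dimensional Hausdorff content, via covers by countably many closed balls. -/
def hContent {X : Type*} [PseudoMetricSpace X] (s : ℝ) (E : Set X) : ℝ≥0∞ :=
  ⨅ (c : ℕ → X) (r : ℕ → ℝ) (_ : ∀ n, 0 ≤ r n)
    (_ : E ⊆ ⋃ n, Metric.closedBall (c n) (r n)),
    ∑' n, ENNReal.ofReal (r n ^ s)

/-- A dimension function: continuous on `(0,∞)`, positive, tending to `0` at `0`. -/
def IsDimFun (f : ℝ → ℝ) : Prop :=
  ContinuousOn f (Set.Ioi 0) ∧ (∀ r > 0, 0 < f r) ∧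
    Filter.Tendsto f (nhdsWithin 0 (Set.Ioi 0)) (nhds 0)

/-- The `ρ`-approximate Hausdorff `f`-measure. -/
def preHausdorffF {X : Type*} [PseudoMetricSpace X] (f : ℝ → ℝ) (ρ : ℝ) (F : Set X) : ℝ≥0∞ :=
  ⨅ (c : ℕ → X) (r : ℕ → ℝ) (_ : ∀ n, 0 < r n ∧ r n < ρ)
    (_ : F ⊆ ⋃ n, Metric.ball (c n) (r n)),
    ∑' n, ENNReal.ofReal (f (r n))

/-- The Hausdorff `f`-measure, obtained as `ρ → 0` (equivalently, the supremum over `ρ > 0`). -/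
def hausdorffF {X : Type*} [PseudoMetricSpace X] (f : ℝ → ℝ) (F : Set X) : ℝ≥0∞ :=
  ⨆ (ρ : ℝ) (_ : 0 < ρ), preHausdorffF f ρ F

end

lemma card_filter_lt (k l : ℕ) (hl : l ≤ k) :
    (Finset.univ.filter fun i : Fin k => (i : ℕ) < l).card = l := by
  rw [Finset.card_filter, Fin.sum_univ_eq_sum_range (fun i => if i < l then 1 else 0) k,
    ← Finset.card_filter]
  have h : Finset.filter (fun i => i < l) (Finset.range k) = Finset.range l := by
    ext i; simp only [Finset.mem_filter, Finset.mem_range]; omega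
  rw [h, Finset.card_range]

lemma box_volume (k l : ℕ) (hl : l ≤ k) (z : Fin k → ℝ) (a b : ℝ) :
    volume (Set.univ.pi fun i : Fin k =>
        if (i : ℕ) < l then Icc (z i - a) (z i + a) else Icc (-b) b)
      = ENNReal.ofReal (2*a) ^ l * ENNReal.ofReal (2*b) ^ (k - l) := by
  rw [volume_pi_pi]
  have h1 : ∀ i : Fin k,
      volume (if (i : ℕ) < l then Icc (z i - a) (z i + a) else Icc (-b) b)
      = if (i : ℕ) < l then ENNReal.ofReal (2*a) else ENNReal.ofReal (2*b) := by
    intro i; split_ifs <;> simp only [Real.volume_Icc] <;> congr 1 <;> ring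
  simp_rw [h1]
  rw [Finset.prod_ite (fun _ => ENNReal.ofReal (2*a)) (fun _ => ENNReal.ofReal (2*b)),
    Finset.prod_const, Finset.prod_const, card_filter_lt k l hl]
  congr 2
  have := Finset.card_filter_add_card_filter_not
    (s := (Finset.univ : Finset (Fin k))) (p := fun i : Fin k => (i : ℕ) < l)
  rw [card_filter_lt k l hl] at this
  simp only [Finset.card_univ, Fintype.card_fin] at this
  omega
lemma lipOn_weaken {E F : Type*} [PseudoEMetricSpace E] [PseudoEMetricSpace F]
    {K K' : ℝ≥0} {f : E → F} {s : Set E} (h : LipschitzOnWith K f s) (hK : K ≤ K') :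
    LipschitzOnWith K' f s := fun x hx y hy =>
  (h hx hy).trans (mul_le_mul_of_nonneg_right (ENNReal.coe_le_coe.2 hK) zero_le)

lemma exists_chart (k l : ℕ) (M : Set (Fin k → ℝ)) (x₀ : Fin k → ℝ)
    (h : ∃ (U : Set (Fin k → ℝ)) (f g : (Fin k → ℝ) → (Fin k → ℝ)),
      IsOpen U ∧ x₀ ∈ U ∧ ContDiffOn ℝ (⊤ : ℕ∞) f U ∧ IsOpen (f '' U) ∧
        ContDiffOn ℝ (⊤ : ℕ∞) g (f '' U) ∧ (∀ y ∈ U, g (f y) = y) ∧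
        f '' (M ∩ U) = (f '' U) ∩ {y : Fin k → ℝ | ∀ i : Fin k, l ≤ (i : ℕ) → y i = 0}) :
    ∃ (ρ : ℝ) (L : ℝ≥0) (f g : (Fin k → ℝ) → (Fin k → ℝ)), 0 < ρ ∧ 1 ≤ L ∧
      LipschitzOnWith L f (closedBall x₀ ρ) ∧
      LipschitzOnWith L g (closedBall (f x₀) ((L : ℝ) * ρ)) ∧
      (∀ y ∈ closedBall x₀ ρ, g (f y) = y) ∧
      (∀ y ∈ closedBall x₀ ρ, (y ∈ M ↔ ∀ i : Fin k, l ≤ (i : ℕ) → f y i = 0)) ∧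
      (∀ q ∈ closedBall (f x₀) ((L : ℝ) * ρ),
        (∀ i : Fin k, l ≤ (i : ℕ) → q i = 0) → g q ∈ M) ∧
      (∀ q ∈ closedBall (f x₀) ((L : ℝ) * ρ), f (g q) = q) := by
  obtain ⟨U, f, g, hU, hxU, hfC, hV, hgC, hginv, himg⟩ := h
  have hfxV : f x₀ ∈ f '' U := mem_image_of_mem f hxU
  have hf1 : ContDiffAt ℝ 1 f x₀ := (hfC.contDiffAt (hU.mem_nhds hxU)).of_le (by exact_mod_cast le_top)
  have hg1 : ContDiffAt ℝ 1 g (f x₀) := (hgC.contDiffAt (hV.mem_nhds hfxV)).of_le (by exact_mod_cast le_top)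
  obtain ⟨K₁, t₁, ht₁, hlip₁⟩ := hf1.exists_lipschitzOnWith
  obtain ⟨K₂, t₂, ht₂, hlip₂⟩ := hg1.exists_lipschitzOnWith
  obtain ⟨ε₁, hε₁, hsub₁⟩ := nhds_basis_closedBall.mem_iff.1 (Filter.inter_mem ht₁ (hU.mem_nhds hxU))
  obtain ⟨ε₂, hε₂, hsub₂⟩ := nhds_basis_closedBall.mem_iff.1 (Filter.inter_mem ht₂ (hV.mem_nhds hfxV))
  set L : ℝ≥0 := max (max K₁ K₂) 1 with hLdef
  have hL1 : 1 ≤ L := le_max_right _ _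
  have hLpos : (0:ℝ) < L := lt_of_lt_of_le one_pos (by exact_mod_cast hL1)
  set ρ : ℝ := min ε₁ (ε₂ / L) with hρdef
  have hρpos : 0 < ρ := lt_min hε₁ (div_pos hε₂ hLpos)
  have hball₁ : closedBall x₀ ρ ⊆ t₁ ∩ U :=
    (closedBall_subset_closedBall (min_le_left _ _)).trans hsub₁
  have hLρ : (L : ℝ) * ρ ≤ ε₂ := by
    have : (L : ℝ) * ρ ≤ L * (ε₂ / L) :=
      mul_le_mul_of_nonneg_left (min_le_right _ _) hLpos.le
    rwa [mul_div_cancel₀ _ hLpos.ne'] at this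
  have hball₂ : closedBall (f x₀) ((L:ℝ) * ρ) ⊆ t₂ ∩ f '' U :=
    (closedBall_subset_closedBall hLρ).trans hsub₂
  have hsubU : closedBall x₀ ρ ⊆ U := hball₁.trans inter_subset_right
  have hsubV : closedBall (f x₀) ((L:ℝ)*ρ) ⊆ f '' U := hball₂.trans inter_subset_right
  refine ⟨ρ, L, f, g, hρpos, hL1, ?_, ?_, ?_, ?_, ?_, ?_⟩
  · exact lipOn_weaken (hlip₁.mono (hball₁.trans inter_subset_left))
      ((le_max_left _ _).trans (le_max_left _ _))
  · exact lipOn_weaken (hlip₂.mono (hball₂.trans inter_subset_left))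
      ((le_max_right _ _).trans (le_max_left _ _))
  · exact fun y hy => hginv y (hsubU hy)
  · intro y hy
    constructor
    · intro hyM i hi
      have : f y ∈ f '' (M ∩ U) := mem_image_of_mem f ⟨hyM, hsubU hy⟩
      rw [himg] at this
      exact this.2 i hi
    · intro hplane
      have : f y ∈ (f '' U) ∩ {y : Fin k → ℝ | ∀ i : Fin k, l ≤ (i : ℕ) → y i = 0} :=
        ⟨mem_image_of_mem f (hsubU hy), hplane⟩
      rw [← himg] at this
      obtain ⟨m, hmMU, hm⟩ := this
      have : y = m := by
        rw [← hginv y (hsubU hy), ← hm, hginv m hmMU.2]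
      exact this ▸ hmMU.1
  · intro q hq hplane
    have : q ∈ f '' (M ∩ U) := by rw [himg]; exact ⟨hsubV hq, hplane⟩
    obtain ⟨m, hmMU, hm⟩ := this
    rw [← hm, hginv m hmMU.2]; exact hmMU.1
  · intro q hq
    obtain ⟨m, hmU, hm⟩ := hsubV hq
    rw [← hm, hginv m hmU]

set_option maxHeartbeats 1000000 in
lemma chart_estimate (k l : ℕ) (hl : l ≤ k) (M : Set (Fin k → ℝ)) (hMne : M.Nonempty)
    (x₀ : Fin k → ℝ) (ρ : ℝ) (hρ : 0 < ρ) (L : ℝ≥0) (hL : 1 ≤ L)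
    (f g : (Fin k → ℝ) → (Fin k → ℝ))
    (hf : LipschitzOnWith L f (closedBall x₀ ρ))
    (hg : LipschitzOnWith L g (closedBall (f x₀) ((L:ℝ) * ρ)))
    (hgf : ∀ y ∈ closedBall x₀ ρ, g (f y) = y)
    (hmem : ∀ y ∈ closedBall x₀ ρ, (y ∈ M ↔ ∀ i : Fin k, l ≤ (i:ℕ) → f y i = 0))
    (hplane : ∀ q ∈ closedBall (f x₀) ((L:ℝ) * ρ),
      (∀ i : Fin k, l ≤ (i:ℕ) → q i = 0) → g q ∈ M)
    (hfg : ∀ q ∈ closedBall (f x₀) ((L:ℝ) * ρ), f (g q) = q)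
    (x : Fin k → ℝ) (hxM : x ∈ M) (hxx : dist x x₀ < ρ/2)
    (δ r : ℝ) (hδ : 0 < δ) (hδr : δ < r) (hrρ : r ≤ ρ/4) :
    ENNReal.ofReal ((((L:ℝ))^(2*k))⁻¹ * δ^(k-l) * r^l)
        ≤ μH[(k:ℝ)] (closedBall x r ∩ {y | infDist y M < δ}) ∧
      μH[(k:ℝ)] (closedBall x r ∩ {y | infDist y M < δ})
        ≤ ENNReal.ofReal (2^k * ((L:ℝ))^(2*k) * δ^(k-l) * r^l) := by
  have hL1 : (1:ℝ) ≤ (L:ℝ) := by exact_mod_cast hL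
  have hL0 : (0:ℝ) < (L:ℝ) := lt_of_lt_of_le one_pos hL1
  have hr0 : (0:ℝ) < r := hδ.trans hδr
  have mu_eq : (μH[(k:ℝ)] : Measure (Fin k → ℝ)) = volume := by
    have := hausdorffMeasure_pi_real (ι := Fin k)
    simpa using this
  set A := closedBall x r ∩ {y | infDist y M < δ} with hA
  have hxball : x ∈ closedBall x₀ ρ := by
    rw [mem_closedBall]; linarith
  have F1 : closedBall x r ⊆ closedBall x₀ ρ := by
    intro y hy
    rw [mem_closedBall] at *
    have := dist_triangle y x x₀
    linarith
  have hdfx : dist (f x) (f x₀) ≤ (L:ℝ) * (ρ/2) := by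
    refine le_trans (hf.dist_le_mul x hxball x₀ (mem_closedBall_self hρ.le)) ?_
    exact mul_le_mul_of_nonneg_left hxx.le hL0.le
  have hfx_plane : ∀ i : Fin k, l ≤ (i:ℕ) → f x i = 0 := (hmem x hxball).1 hxM
  have hexp : ((L:ℝ≥0∞)) ^ ((k:ℕ):ℝ) = (L:ℝ≥0∞) ^ k := ENNReal.rpow_natCast _ k
  have hLpow : (L:ℝ≥0∞) ^ k = ENNReal.ofReal ((L:ℝ)^k) := by
    rw [ENNReal.ofReal_pow hL0.le, ENNReal.ofReal_coe_nnreal]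
  have hLk0 : ((L:ℝ≥0∞)) ^ k ≠ 0 := by
    apply pow_ne_zero
    exact_mod_cast (zero_lt_one.trans_le hL).ne'
  have hLktop : ((L:ℝ≥0∞)) ^ k ≠ ∞ := by
    exact ENNReal.pow_ne_top ENNReal.coe_ne_top
  obtain ⟨m, hm⟩ : ∃ m, k = l + m := ⟨k - l, by omega⟩
  constructor
  · -- LOWER BOUND
    set z := f x with hz
    set S := Set.univ.pi (fun i : Fin k =>
      if (i:ℕ) < l then Icc (z i - r/(2*L)) (z i + r/(2*L))
      else Icc (-(δ/(2*(L:ℝ)))) (δ/(2*L))) with hS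
    have hδrL : δ/(2*(L:ℝ)) ≤ r/(2*L) := by gcongr
    have hSz : ∀ q ∈ S, dist q z ≤ r/(2*L) := by
      intro q hq
      rw [dist_pi_le_iff (by positivity)]
      intro i
      have hqi := hq i (mem_univ i)
      rw [Real.dist_eq]
      by_cases hi : (i:ℕ) < l
      · simp only [if_pos hi, mem_Icc] at hqi
        rw [abs_le]
        constructor <;> [linarith [hqi.1]; linarith [hqi.2]]
      · simp only [if_neg hi, mem_Icc] at hqi
        have hzi : z i = 0 := hfx_plane i (by omega)
        rw [hzi, sub_zero, abs_le]
        constructor <;> [linarith [hqi.1]; linarith [hqi.2]]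
    have hSball : S ⊆ closedBall (f x₀) ((L:ℝ) * ρ) := by
      intro q hq
      rw [mem_closedBall]
      have h1 := hSz q hq
      have h2 : dist q (f x₀) ≤ dist q z + dist z (f x₀) := dist_triangle _ _ _
      have h3 : r/(2*(L:ℝ)) ≤ r := by
        rw [div_le_iff₀ (by positivity)]
        nlinarith
      nlinarith [hdfx]
    have hgS_A : ∀ q ∈ S, g q ∈ A := by
      intro q hq
      have hqball := hSball hq
      have hzball : z ∈ closedBall (f x₀) ((L:ℝ)*ρ) := by
        rw [mem_closedBall]; nlinarith [hdfx]
      have hgz : g z = x := hgf x hxball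
      have hdgq : dist (g q) x ≤ r/2 := by
        have := hg.dist_le_mul q hqball z hzball
        rw [hgz] at this
        refine this.trans ?_
        have h5 := hSz q hq
        rw [le_div_iff₀ (by positivity : (0:ℝ) < 2*(L:ℝ))] at h5
        nlinarith [h5]
      constructor
      · rw [mem_closedBall]; linarith
      · -- infDist < δ
        set q' : Fin k → ℝ := fun i => if (i:ℕ) < l then q i else 0 with hq'
        have hq'S : q' ∈ S := by
          intro i _
          by_cases hi : (i:ℕ) < l
          · have := hq i (mem_univ i)
            simp only [hq', if_pos hi, mem_Icc] at this ⊢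
            exact this
          · simp only [hq', if_neg hi, mem_Icc]
            exact ⟨neg_nonpos.2 (by positivity), by positivity⟩
        have hq'plane : ∀ i : Fin k, l ≤ (i:ℕ) → q' i = 0 := by
          intro i hi; simp [hq', Nat.not_lt.2 hi]
        have hmM : g q' ∈ M := hplane q' (hSball hq'S) hq'plane
        have hdqq' : dist q q' ≤ δ/(2*(L:ℝ)) := by
          rw [dist_pi_le_iff (by positivity)]
          intro i
          by_cases hi : (i:ℕ) < l
          · simp [hq', if_pos hi, Real.dist_eq]; positivity
          · have hqi := hq i (mem_univ i)
            simp only [if_neg hi, mem_Icc] at hqi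
            simp only [hq', if_neg hi, Real.dist_eq, sub_zero]
            rw [abs_le]
            constructor <;> [linarith [hqi.1]; linarith [hqi.2]]
        have hd : dist (g q) (g q') ≤ δ/2 := by
          refine (hg.dist_le_mul q hqball q' (hSball hq'S)).trans ?_
          have h6 : dist q q' * (2*(L:ℝ)) ≤ δ := by
            rwa [le_div_iff₀ (by positivity : (0:ℝ) < 2*(L:ℝ))] at hdqq'
          nlinarith [h6]
        have : infDist (g q) M ≤ dist (g q) (g q') := infDist_le_dist_of_mem hmM
        simp only [mem_setOf_eq]
        linarith
    have hgS_cb : g '' S ⊆ closedBall x₀ ρ := by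
      rintro y ⟨q, hq, rfl⟩
      exact F1 (hgS_A q hq).1
    have hSsub : S ⊆ f '' (g '' S) := by
      intro q hq
      exact ⟨g q, mem_image_of_mem g hq, hfg q (hSball hq)⟩
    have hmuS : μH[(k:ℝ)] S = ENNReal.ofReal (r/(L:ℝ)) ^ l * ENNReal.ofReal (δ/(L:ℝ)) ^ (k-l) := by
      rw [mu_eq]
      have := box_volume k l hl z (r/(2*L)) (δ/(2*(L:ℝ)))
      rw [hS, this]
      congr 2 <;> · congr 1; field_simp
    have key : μH[(k:ℝ)] S ≤ (L:ℝ≥0∞) ^ k * μH[(k:ℝ)] A := by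
      calc μH[(k:ℝ)] S ≤ μH[(k:ℝ)] (f '' (g '' S)) := measure_mono hSsub
        _ ≤ (L:ℝ≥0∞) ^ ((k:ℕ):ℝ) * μH[(k:ℝ)] (g '' S) :=
            (hf.mono hgS_cb).hausdorffMeasure_image_le (by positivity)
        _ = (L:ℝ≥0∞) ^ k * μH[(k:ℝ)] (g '' S) := by rw [hexp]
        _ ≤ (L:ℝ≥0∞) ^ k * μH[(k:ℝ)] A := by
            gcongr
            rintro y ⟨q, hq, rfl⟩
            exact hgS_A q hq
    have hofReal : ENNReal.ofReal ((((L:ℝ))^(2*k))⁻¹ * δ^(k-l) * r^l)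
        = μH[(k:ℝ)] S / (L:ℝ≥0∞) ^ k := by
      rw [hmuS, ← ENNReal.ofReal_pow (by positivity), ← ENNReal.ofReal_pow (by positivity),
        ← ENNReal.ofReal_mul (by positivity), hLpow, ← ENNReal.ofReal_div_of_pos (by positivity)]
      congr 1
      subst hm
      simp only [Nat.add_sub_cancel_left]
      ring
    rw [hofReal]
    rw [ENNReal.div_le_iff hLk0 hLktop]
    calc μH[(k:ℝ)] S ≤ (L:ℝ≥0∞) ^ k * μH[(k:ℝ)] A := key
      _ = μH[(k:ℝ)] A * (L:ℝ≥0∞) ^ k := mul_comm _ _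
  · -- UPPER BOUND
    set Box := Set.univ.pi (fun i : Fin k =>
      if (i:ℕ) < l then Icc (f x i - (L:ℝ)*r) (f x i + (L:ℝ)*r)
      else Icc (-((L:ℝ)*δ)) ((L:ℝ)*δ)) with hBox
    have hABox : A ⊆ g '' Box := by
      intro y hy
      obtain ⟨hyball, hyδ⟩ := hy
      have hyρ : y ∈ closedBall x₀ ρ := F1 hyball
      obtain ⟨p, hpM, hpy⟩ := (infDist_lt_iff hMne).1 hyδ
      have hpρ : p ∈ closedBall x₀ ρ := by
        rw [mem_closedBall] at *
        have h1 := dist_triangle p y x₀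
        have h2 := dist_triangle y x x₀
        rw [dist_comm p y] at h1
        linarith
      have hfp : ∀ i : Fin k, l ≤ (i:ℕ) → f p i = 0 := (hmem p hpρ).1 hpM
      have hfyBox : f y ∈ Box := by
        intro i _
        by_cases hi : (i:ℕ) < l
        · simp only [if_pos hi, mem_Icc]
          have h1 : dist (f y i) (f x i) ≤ dist (f y) (f x) := dist_le_pi_dist _ _ _
          have h2 : dist (f y) (f x) ≤ (L:ℝ) * r := by
            refine (hf.dist_le_mul y hyρ x hxball).trans ?_
            exact mul_le_mul_of_nonneg_left (mem_closedBall.1 hyball) hL0.le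
          rw [Real.dist_eq, abs_le] at h1
          constructor <;> linarith [h1.1, h1.2]
        · simp only [if_neg hi, mem_Icc]
          have h1 : dist (f y i) (f p i) ≤ dist (f y) (f p) := dist_le_pi_dist _ _ _
          have h2 : dist (f y) (f p) ≤ (L:ℝ) * δ := by
            refine (hf.dist_le_mul y hyρ p hpρ).trans ?_
            exact mul_le_mul_of_nonneg_left hpy.le hL0.le
          rw [Real.dist_eq, hfp i (by omega), sub_zero, abs_le] at h1
          constructor <;> [linarith [h1.1, h1.2]; linarith [h1.1, h1.2]]
      exact ⟨f y, hfyBox, hgf y hyρ⟩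
    have hBoxball : Box ⊆ closedBall (f x₀) ((L:ℝ) * ρ) := by
      intro q hq
      rw [mem_closedBall, dist_pi_le_iff (by positivity)]
      intro i
      have h0 : dist (f x i) (f x₀ i) ≤ (L:ℝ) * (ρ/2) :=
        (dist_le_pi_dist (f x) (f x₀) i).trans hdfx
      have hqi := hq i (mem_univ i)
      have htr : dist (q i) (f x₀ i) ≤ dist (q i) (f x i) + dist (f x i) (f x₀ i) :=
        dist_triangle _ _ _
      have hqfx : dist (q i) (f x i) ≤ (L:ℝ) * r := by
        by_cases hi : (i:ℕ) < l
        · simp only [if_pos hi, mem_Icc] at hqi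
          rw [Real.dist_eq, abs_le]
          constructor <;> [linarith [hqi.1]; linarith [hqi.2]]
        · simp only [if_neg hi, mem_Icc] at hqi
          have : f x i = 0 := hfx_plane i (by omega)
          rw [Real.dist_eq, this, sub_zero, abs_le]
          have : (L:ℝ) * δ ≤ L * r := by nlinarith
          constructor <;> [linarith [hqi.1]; linarith [hqi.2]]
      have h7 : (L:ℝ)*r ≤ (L:ℝ)*(ρ/2) := mul_le_mul_of_nonneg_left (by linarith) hL0.le
      have h8 : (L:ℝ)*(ρ/2) + (L:ℝ)*(ρ/2) = (L:ℝ)*ρ := by ring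
      linarith [htr, hqfx, h0, h7, h8]
    have hmuBox : μH[(k:ℝ)] Box
        = ENNReal.ofReal (2*((L:ℝ)*r)) ^ l * ENNReal.ofReal (2*((L:ℝ)*δ)) ^ (k-l) := by
      rw [mu_eq]
      have hb := box_volume k l hl (f x) ((L:ℝ)*r) ((L:ℝ)*δ)
      rw [hBox, hb]
    calc μH[(k:ℝ)] A ≤ μH[(k:ℝ)] (g '' Box) := measure_mono hABox
      _ ≤ (L:ℝ≥0∞) ^ ((k:ℕ):ℝ) * μH[(k:ℝ)] Box :=
          (hg.mono hBoxball).hausdorffMeasure_image_le (by positivity)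
      _ = ENNReal.ofReal (2^k * ((L:ℝ))^(2*k) * δ^(k-l) * r^l) := by
          rw [hexp, hmuBox, hLpow, ← ENNReal.ofReal_pow (by positivity),
            ← ENNReal.ofReal_pow (by positivity), ← ENNReal.ofReal_mul (by positivity),
            ← ENNReal.ofReal_mul (by positivity)]
          congr 1
          subst hm
          simp only [Nat.add_sub_cancel_left]
          ring
/-- A smooth compact `ℓ`-dimensional submanifold of `ℝ^k` satisfies the local scaling
property with respect to `κ = ℓ/k` and `g(r) = r^k`. -/
theorem stmt13 (k l : ℕ) (hl : l ≤ k) (M : Set (Fin k → ℝ))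
    (hMcp : IsCompact M) (hMne : M.Nonempty)
    (hsub : ∀ x ∈ M, ∃ (U : Set (Fin k → ℝ)) (f g : (Fin k → ℝ) → (Fin k → ℝ)),
      IsOpen U ∧ x ∈ U ∧ ContDiffOn ℝ (⊤ : ℕ∞) f U ∧ IsOpen (f '' U) ∧
        ContDiffOn ℝ (⊤ : ℕ∞) g (f '' U) ∧ (∀ y ∈ U, g (f y) = y) ∧
        f '' (M ∩ U) = (f '' U) ∩ {y : Fin k → ℝ | ∀ i : Fin k, l ≤ (i : ℕ) → y i = 0}) :
    ∃ c₃ c₄ r₀ : ℝ, 0 < c₃ ∧ 0 < c₄ ∧ 0 < r₀ ∧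
      ∀ δ r : ℝ, 0 < δ → δ < r → r < r₀ → ∀ x ∈ M,
        ENNReal.ofReal (c₃ * δ ^ (k - l) * r ^ l) ≤
            μH[(k : ℝ)] (Metric.closedBall x r ∩ {y | Metric.infDist y M < δ}) ∧
          μH[(k : ℝ)] (Metric.closedBall x r ∩ {y | Metric.infDist y M < δ}) ≤
            ENNReal.ofReal (c₄ * δ ^ (k - l) * r ^ l) := by
  classical
  choose! ρ L f g h using fun x hx => exists_chart k l M x (hsub x hx)
  have hcov : M ⊆ ⋃ c ∈ M, ball c (ρ c / 2) := by
    intro x hx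
    exact mem_biUnion hx (mem_ball_self (by have := (h x hx).1; linarith))
  obtain ⟨t, htM, htfin, htcov⟩ :=
    hMcp.elim_finite_subcover_image (fun c _ => isOpen_ball) hcov
  set tF : Finset (Fin k → ℝ) := htfin.toFinset with htF
  have htne : tF.Nonempty := by
    obtain ⟨x, hx⟩ := hMne
    obtain ⟨c, hct, _⟩ := mem_iUnion₂.1 (htcov hx)
    exact ⟨c, htfin.mem_toFinset.2 hct⟩
  set Lmax : ℝ≥0 := tF.sup L ⊔ 1 with hLmax
  have hLmax1 : (1:ℝ) ≤ (Lmax:ℝ) := by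
    have : (1:ℝ≥0) ≤ Lmax := le_sup_right
    exact_mod_cast this
  have hLmax0 : (0:ℝ) < (Lmax:ℝ) := lt_of_lt_of_le one_pos hLmax1
  set r₀ : ℝ := (tF.inf' htne ρ) / 4 with hr₀def
  have hr₀ : 0 < r₀ := by
    have : 0 < tF.inf' htne ρ := by
      rw [Finset.lt_inf'_iff]
      intro c hc
      exact (h c (htM (htfin.mem_toFinset.1 hc))).1
    positivity
  refine ⟨((Lmax:ℝ)^(2*k))⁻¹, 2^k * (Lmax:ℝ)^(2*k), r₀, by positivity, by positivity, hr₀, ?_⟩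
  intro δ r hδ hδr hrr₀ x hx
  obtain ⟨c, hct, hxc⟩ := mem_iUnion₂.1 (htcov hx)
  have hctF : c ∈ tF := htfin.mem_toFinset.2 hct
  have hcM : c ∈ M := htM hct
  obtain ⟨hρc, hLc1, hfl, hgl, hgf, hmem, hplane, hfg⟩ := h c hcM
  have hrρc : r ≤ ρ c / 4 := by
    have h1 : tF.inf' htne ρ ≤ ρ c := Finset.inf'_le ρ hctF
    rw [hr₀def] at hrr₀
    linarith
  have hest := chart_estimate k l hl M hMne c (ρ c) hρc (L c) hLc1 (f c) (g c)
    hfl hgl hgf hmem hplane hfg x hx (mem_ball.1 hxc) δ r hδ hδr hrρc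
  have hLcLe : ((L c : ℝ)) ≤ (Lmax:ℝ) := by
    have : L c ≤ Lmax := (Finset.le_sup hctF).trans le_sup_left
    exact_mod_cast this
  have hLc0 : (0:ℝ) < (L c : ℝ) := lt_of_lt_of_le one_pos (by exact_mod_cast hLc1)
  constructor
  · refine le_trans ?_ hest.1
    apply ENNReal.ofReal_le_ofReal
    have h1 : ((Lmax:ℝ)^(2*k))⁻¹ ≤ (((L c):ℝ)^(2*k))⁻¹ := by
      apply inv_anti₀ (by positivity)
      exact pow_le_pow_left₀ hLc0.le hLcLe _
    have h2 : (0:ℝ) ≤ δ ^ (k-l) * r ^ l := mul_nonneg (pow_nonneg hδ.le _) (pow_nonneg (by linarith) _)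
    calc ((Lmax:ℝ)^(2*k))⁻¹ * δ^(k-l) * r^l
        = ((Lmax:ℝ)^(2*k))⁻¹ * (δ^(k-l) * r^l) := by ring
      _ ≤ (((L c):ℝ)^(2*k))⁻¹ * (δ^(k-l) * r^l) := mul_le_mul_of_nonneg_right h1 h2
      _ = (((L c):ℝ)^(2*k))⁻¹ * δ^(k-l) * r^l := by ring
  · refine hest.2.trans ?_
    apply ENNReal.ofReal_le_ofReal
    have h1 : ((L c:ℝ))^(2*k) ≤ (Lmax:ℝ)^(2*k) := pow_le_pow_left₀ hLc0.le hLcLe _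
    have h2 : (0:ℝ) ≤ δ ^ (k-l) * r ^ l := mul_nonneg (pow_nonneg hδ.le _) (pow_nonneg (by linarith) _)
    calc 2^k * ((L c:ℝ))^(2*k) * δ^(k-l) * r^l
        = (2:ℝ)^k * ((L c:ℝ))^(2*k) * (δ^(k-l) * r^l) := by ring
      _ ≤ (2:ℝ)^k * (Lmax:ℝ)^(2*k) * (δ^(k-l) * r^l) := by
          apply mul_le_mul_of_nonneg_right _ h2
          apply mul_le_mul_of_nonneg_left h1 (by positivity)
      _ = 2^k * (Lmax:ℝ)^(2*k) * δ^(k-l) * r^l := by ring
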